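/- arXiv:0908.1843 — 4 statements merged into one kernel-verified Lean document; each statement's English description precedes it below -/
import Mathlib

section
/- Let E be a module over the ring L⁰(F,ℝ) of equivalence classes of real-valued random variables on a probability space (Ω,F,P), let f : E → L⁰(F,ℝ) be an ℝ-linear map and p : E → L⁰(F,ℝ) satisfy p(ξx) = ξp(x) for all ξ ∈ L⁰₊ and p(x+y) ≤ p(x)+p(y). If f(x) ≤ p(x) for all x ∈ E, then f is L⁰(F,ℝ)-linear, i.e., f(ξx) = ξ f(x) for all ξ ∈ L⁰(F,ℝ) and x ∈ E. -/
open MeasureTheory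

variable {Ω : Type*} [MeasurableSpace Ω] {μ : MeasureTheory.Measure Ω}

/-- `L⁰(F,𝕜)`, the space `Ω →ₘ[μ] 𝕜` of equivalence classes of `𝕜`-valued random
variables, is a commutative ring under the pointwise operations. -/
noncomputable instance L0.instCommRing {𝕜 : Type*} [RCLike 𝕜] : CommRing (Ω →ₘ[μ] 𝕜) :=
  { (inferInstance : AddCommGroup (Ω →ₘ[μ] 𝕜)),
    (inferInstance : CommMonoid (Ω →ₘ[μ] 𝕜)) with
    left_distrib := fun f g h => AEEqFun.toGerm_injective <| by
      simp only [AEEqFun.mul_toGerm, AEEqFun.add_toGerm, mul_add]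
    right_distrib := fun f g h => AEEqFun.toGerm_injective <| by
      simp only [AEEqFun.mul_toGerm, AEEqFun.add_toGerm, add_mul]
    zero_mul := fun f => AEEqFun.toGerm_injective <| by
      simp only [AEEqFun.mul_toGerm, AEEqFun.zero_toGerm, zero_mul]
    mul_zero := fun f => AEEqFun.toGerm_injective <| by
      simp only [AEEqFun.mul_toGerm, AEEqFun.zero_toGerm, mul_zero] }

namespace L0AuxLemmas

variable {Ω : Type*} [MeasurableSpace Ω] {μ : Measure Ω}

lemma mk_nonneg {g : Ω → ℝ} (hg : AEStronglyMeasurable g μ) (h : ∀ ω, 0 ≤ g ω) :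
    (0 : Ω →ₘ[μ] ℝ) ≤ AEEqFun.mk g hg := by
  refine AEEqFun.coeFn_le.1 ?_
  filter_upwards [AEEqFun.coeFn_mk g hg, AEEqFun.coeFn_zero (β := ℝ) (μ := μ)] with ω h1 h2
  rw [h1, h2]; exact h ω

lemma add_le_add' {a b c d : Ω →ₘ[μ] ℝ} (h1 : a ≤ b) (h2 : c ≤ d) : a + c ≤ b + d := by
  refine AEEqFun.coeFn_le.1 ?_
  filter_upwards [AEEqFun.coeFn_le.2 h1, AEEqFun.coeFn_le.2 h2, AEEqFun.coeFn_add a c,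
    AEEqFun.coeFn_add b d] with ω w1 w2 w3 w4
  rw [w3, w4]; exact add_le_add w1 w2

lemma real_est (a b u v w : ℝ)
    (h1 : a ≤ max b 0 * u + max (-b) 0 * v)
    (h2 : -a ≤ max (-b) 0 * u + max b 0 * v) :
    |a - b * w| ≤ |b| * (|u| + |v| + |w|) := by
  have hb1 : max b 0 ≤ |b| := max_le (le_abs_self b) (abs_nonneg b)
  have hb2 : max (-b) 0 ≤ |b| := max_le (abs_neg b ▸ le_abs_self (-b)) (abs_nonneg b)
  have hn1 : (0:ℝ) ≤ max b 0 := le_max_right _ _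
  have hn2 : (0:ℝ) ≤ max (-b) 0 := le_max_right _ _
  have k1 : a ≤ |b| * |u| + |b| * |v| := by
    calc a ≤ max b 0 * u + max (-b) 0 * v := h1
    _ ≤ max b 0 * |u| + max (-b) 0 * |v| :=
        add_le_add (mul_le_mul_of_nonneg_left (le_abs_self u) hn1)
          (mul_le_mul_of_nonneg_left (le_abs_self v) hn2)
    _ ≤ |b| * |u| + |b| * |v| :=
        add_le_add (mul_le_mul_of_nonneg_right hb1 (abs_nonneg u))
          (mul_le_mul_of_nonneg_right hb2 (abs_nonneg v))
  have k2 : -a ≤ |b| * |u| + |b| * |v| := by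
    calc -a ≤ max (-b) 0 * u + max b 0 * v := h2
    _ ≤ max (-b) 0 * |u| + max b 0 * |v| :=
        add_le_add (mul_le_mul_of_nonneg_left (le_abs_self u) hn2)
          (mul_le_mul_of_nonneg_left (le_abs_self v) hn1)
    _ ≤ |b| * |u| + |b| * |v| :=
        add_le_add (mul_le_mul_of_nonneg_right hb2 (abs_nonneg u))
          (mul_le_mul_of_nonneg_right hb1 (abs_nonneg v))
  have k3 : |a| ≤ |b| * |u| + |b| * |v| := abs_le.2 ⟨by linarith, k1⟩
  calc |a - b * w| ≤ |a| + |b * w| := abs_sub _ _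
  _ ≤ |b| * |u| + |b| * |v| + |b| * |w| := by rw [abs_mul]; linarith
  _ = |b| * (|u| + |v| + |w|) := by ring

end L0AuxLemmas

open Filter L0AuxLemmas in
/-- **Lemma 2.7 (real case).** Let `E` be a module over the ring `L⁰(F,ℝ)`, `f : E → L⁰(F,ℝ)`
an `ℝ`-linear map and `p : E → L⁰(F,ℝ)` an `L⁰`-sublinear function dominating `f`.
Then `f` is `L⁰(F,ℝ)`-linear. -/
theorem l0_linearity_of_dominated {Ω : Type*} [MeasurableSpace Ω] (μ : Measure Ω)
    [IsProbabilityMeasure μ] (E : Type*) [AddCommGroup E] [Module (Ω →ₘ[μ] ℝ) E]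
    (f p : E → Ω →ₘ[μ] ℝ)
    -- `f` is `ℝ`-linear (the scalar `a : ℝ` acts on `E` through `a • 1 ∈ L⁰(F,ℝ)`):
    (hf_add : ∀ x y : E, f (x + y) = f x + f y)
    (hf_smul : ∀ (a : ℝ) (x : E), f ((a • (1 : Ω →ₘ[μ] ℝ)) • x) = a • f x)
    -- `p` is `L⁰`-sublinear:
    (hp_smul : ∀ ξ : Ω →ₘ[μ] ℝ, 0 ≤ ξ → ∀ x : E, p (ξ • x) = ξ * p x)
    (hp_add : ∀ x y : E, p (x + y) ≤ p x + p y)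
    -- `f` is dominated by `p`:
    (hfp : ∀ x : E, f x ≤ p x) :
    ∀ (ξ : Ω →ₘ[μ] ℝ) (x : E), f (ξ • x) = ξ * f x := by
  have hf0 : f 0 = 0 := by
    have h := hf_add 0 0
    rw [add_zero] at h
    exact (left_eq_add.mp h)
  have hfneg : ∀ x : E, f (-x) = -f x := by
    intro x
    have h := hf_add x (-x)
    rw [add_neg_cancel, hf0] at h
    exact eq_neg_of_add_eq_zero_right h.symm
  -- Step 1: vanishing off the support of the indicator
  have key_vanish : ∀ (A : Set Ω) (hA : MeasurableSet A) (x : E),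
      f ((AEEqFun.mk (A.indicator fun _ => (1:ℝ))
            (measurable_const.indicator hA).aestronglyMeasurable : Ω →ₘ[μ] ℝ) • x)
        = (AEEqFun.mk (A.indicator fun _ => (1:ℝ))
            (measurable_const.indicator hA).aestronglyMeasurable : Ω →ₘ[μ] ℝ)
          * f ((AEEqFun.mk (A.indicator fun _ => (1:ℝ))
            (measurable_const.indicator hA).aestronglyMeasurable : Ω →ₘ[μ] ℝ) • x) := by
    intro A hA x
    set e : Ω →ₘ[μ] ℝ := AEEqFun.mk (A.indicator fun _ => (1:ℝ))
      (measurable_const.indicator hA).aestronglyMeasurable with he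
    have he_nonneg : (0 : Ω →ₘ[μ] ℝ) ≤ e :=
      mk_nonneg _ fun ω => Set.indicator_nonneg (fun _ _ => zero_le_one) ω
    have h1 : f (e • x) ≤ e * p x := (hfp _).trans (hp_smul e he_nonneg x).le
    have h2 : -(f (e • x)) ≤ e * p (-x) := by
      have : f (e • (-x)) ≤ e * p (-x) := (hfp _).trans (hp_smul e he_nonneg (-x)).le
      rwa [smul_neg, hfneg] at this
    apply AEEqFun.ext
    filter_upwards [AEEqFun.coeFn_le.2 h1, AEEqFun.coeFn_le.2 h2,
      AEEqFun.coeFn_mul e (p x), AEEqFun.coeFn_mul e (p (-x)),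
      AEEqFun.coeFn_mul e (f (e • x)),
      AEEqFun.coeFn_mk (A.indicator fun _ => (1:ℝ))
        (measurable_const.indicator hA).aestronglyMeasurable,
      AEEqFun.coeFn_neg (f (e • x))] with ω w1 w2 w3 w4 w5 w6 w7
    rw [w5, Pi.mul_apply, w6]
    rw [w3, Pi.mul_apply, w6] at w1
    rw [w7, Pi.neg_apply] at w2
    rw [w4, Pi.mul_apply, w6] at w2
    by_cases hω : ω ∈ A
    · simp [Set.indicator_of_mem hω]
    · simp only [Set.indicator_of_notMem hω, zero_mul] at w1 w2 ⊢
      linarith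
  -- Step 2: indicator linearity
  have key_ind : ∀ (A : Set Ω) (hA : MeasurableSet A) (x : E),
      f ((AEEqFun.mk (A.indicator fun _ => (1:ℝ))
            (measurable_const.indicator hA).aestronglyMeasurable : Ω →ₘ[μ] ℝ) • x)
        = (AEEqFun.mk (A.indicator fun _ => (1:ℝ))
            (measurable_const.indicator hA).aestronglyMeasurable : Ω →ₘ[μ] ℝ) * f x := by
    intro A hA x
    set e : Ω →ₘ[μ] ℝ := AEEqFun.mk (A.indicator fun _ => (1:ℝ))
      (measurable_const.indicator hA).aestronglyMeasurable with he
    set e' : Ω →ₘ[μ] ℝ := AEEqFun.mk (Aᶜ.indicator fun _ => (1:ℝ))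
      (measurable_const.indicator hA.compl).aestronglyMeasurable with he'
    have hsum : e + e' = 1 := by
      apply AEEqFun.ext
      filter_upwards [AEEqFun.coeFn_add e e',
        AEEqFun.coeFn_mk (A.indicator fun _ => (1:ℝ))
          (measurable_const.indicator hA).aestronglyMeasurable,
        AEEqFun.coeFn_mk (Aᶜ.indicator fun _ => (1:ℝ))
          (measurable_const.indicator hA.compl).aestronglyMeasurable,
        AEEqFun.coeFn_one (β := ℝ) (μ := μ)] with ω w1 w2 w3 w4
      rw [w1, Pi.add_apply, w2, w3, w4, Pi.one_apply]
      by_cases hω : ω ∈ A <;>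
        simp [Set.indicator_apply, hω]
    have hprod : e * e' = 0 := by
      apply AEEqFun.ext
      filter_upwards [AEEqFun.coeFn_mul e e',
        AEEqFun.coeFn_mk (A.indicator fun _ => (1:ℝ))
          (measurable_const.indicator hA).aestronglyMeasurable,
        AEEqFun.coeFn_mk (Aᶜ.indicator fun _ => (1:ℝ))
          (measurable_const.indicator hA.compl).aestronglyMeasurable,
        AEEqFun.coeFn_zero (β := ℝ) (μ := μ)] with ω w1 w2 w3 w4
      rw [w1, Pi.mul_apply, w2, w3, w4, Pi.zero_apply]
      by_cases hω : ω ∈ A <;>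
        simp [Set.indicator_apply, hω]
    have hsplit : f x = f (e • x) + f (e' • x) := by
      rw [← hf_add]
      congr 1
      rw [← add_smul, hsum, one_smul]
    calc f (e • x) = e * f (e • x) := key_vanish A hA x
      _ = e * f (e • x) + (e * e') * f (e' • x) := by rw [hprod, zero_mul, add_zero]
      _ = e * f (e • x) + e * (e' * f (e' • x)) := by ring
      _ = e * f (e • x) + e * f (e' • x) := by rw [← key_vanish Aᶜ hA.compl x]
      _ = e * (f (e • x) + f (e' • x)) := (mul_add _ _ _).symm
      _ = e * f x := by rw [← hsplit]
  -- smul-one-mul helper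
  have smul_one_mul : ∀ (c : ℝ) (ξ : Ω →ₘ[μ] ℝ), (c • (1 : Ω →ₘ[μ] ℝ)) * ξ = c • ξ := by
    intro c ξ
    apply AEEqFun.ext
    filter_upwards [AEEqFun.coeFn_mul (c • (1 : Ω →ₘ[μ] ℝ)) ξ,
      AEEqFun.coeFn_smul c (1 : Ω →ₘ[μ] ℝ), AEEqFun.coeFn_smul c ξ,
      AEEqFun.coeFn_one (β := ℝ) (μ := μ)] with ω h1 h2 h3 h4
    rw [h1, h3, Pi.mul_apply, h2, Pi.smul_apply, Pi.smul_apply, h4, Pi.one_apply]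
    simp [smul_eq_mul]
  -- Step 3: simple functions
  have key_simple : ∀ φ : SimpleFunc Ω ℝ, ∀ x : E,
      f ((AEEqFun.mk ⇑φ φ.aestronglyMeasurable : Ω →ₘ[μ] ℝ) • x)
        = (AEEqFun.mk ⇑φ φ.aestronglyMeasurable : Ω →ₘ[μ] ℝ) * f x := by
    intro φ
    induction φ using SimpleFunc.induction with
    | const c hs =>
      rename_i s
      intro x
      have hcoe : (AEEqFun.mk ⇑(SimpleFunc.piecewise s hs (SimpleFunc.const Ω c)
            (SimpleFunc.const Ω 0)) (SimpleFunc.aestronglyMeasurable _) : Ω →ₘ[μ] ℝ)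
          = (c • (1 : Ω →ₘ[μ] ℝ)) * (AEEqFun.mk (s.indicator fun _ => (1:ℝ))
            (measurable_const.indicator hs).aestronglyMeasurable : Ω →ₘ[μ] ℝ) := by
        apply AEEqFun.ext
        filter_upwards [AEEqFun.coeFn_mk ⇑(SimpleFunc.piecewise s hs (SimpleFunc.const Ω c)
            (SimpleFunc.const Ω 0)) (SimpleFunc.aestronglyMeasurable _),
          AEEqFun.coeFn_mul (c • (1 : Ω →ₘ[μ] ℝ)) (AEEqFun.mk (s.indicator fun _ => (1:ℝ))
            (measurable_const.indicator hs).aestronglyMeasurable : Ω →ₘ[μ] ℝ),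
          AEEqFun.coeFn_smul c (1 : Ω →ₘ[μ] ℝ),
          AEEqFun.coeFn_one (β := ℝ) (μ := μ),
          AEEqFun.coeFn_mk (s.indicator fun _ => (1:ℝ))
            (measurable_const.indicator hs).aestronglyMeasurable] with ω w1 w2 w3 w4 w5
        rw [w1, w2, Pi.mul_apply, w3, Pi.smul_apply, w4, Pi.one_apply, w5]
        by_cases hω : ω ∈ s <;>
          simp [SimpleFunc.piecewise_apply, Set.indicator_apply, hω]
      rw [hcoe, mul_smul, hf_smul, key_ind s hs x, ← smul_one_mul, mul_assoc]
    | add hdisj hφ hψ =>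
      rename_i φ ψ
      intro x
      have hcoe : (AEEqFun.mk ⇑(φ + ψ) (SimpleFunc.aestronglyMeasurable _) : Ω →ₘ[μ] ℝ)
          = AEEqFun.mk ⇑φ φ.aestronglyMeasurable + AEEqFun.mk ⇑ψ ψ.aestronglyMeasurable := by
        apply AEEqFun.ext
        filter_upwards [AEEqFun.coeFn_mk ⇑(φ + ψ) (SimpleFunc.aestronglyMeasurable _),
          AEEqFun.coeFn_add (AEEqFun.mk ⇑φ φ.aestronglyMeasurable : Ω →ₘ[μ] ℝ)
            (AEEqFun.mk ⇑ψ ψ.aestronglyMeasurable),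
          AEEqFun.coeFn_mk ⇑φ φ.aestronglyMeasurable,
          AEEqFun.coeFn_mk ⇑ψ ψ.aestronglyMeasurable] with ω w1 w2 w3 w4
        rw [w1, w2, Pi.add_apply, w3, w4]
        simp
      rw [hcoe, add_smul, hf_add, hφ, hψ, add_mul]
  -- Step 4: one-sided bound for arbitrary measurable representative
  have key_bound : ∀ (g : Ω → ℝ) (hg : Measurable g) (x : E),
      f ((AEEqFun.mk g hg.aestronglyMeasurable : Ω →ₘ[μ] ℝ) • x) ≤
        (AEEqFun.mk (fun ω => max (g ω) 0)
          ((hg.max measurable_const).aestronglyMeasurable) : Ω →ₘ[μ] ℝ) * p x +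
        (AEEqFun.mk (fun ω => max (-g ω) 0)
          ((hg.neg.max measurable_const).aestronglyMeasurable) : Ω →ₘ[μ] ℝ) * p (-x) := by
    intro g hg x
    set gp : Ω →ₘ[μ] ℝ := AEEqFun.mk (fun ω => max (g ω) 0)
      ((hg.max measurable_const).aestronglyMeasurable) with hgp
    set gm : Ω →ₘ[μ] ℝ := AEEqFun.mk (fun ω => max (-g ω) 0)
      ((hg.neg.max measurable_const).aestronglyMeasurable) with hgm
    have hp1 : (0 : Ω →ₘ[μ] ℝ) ≤ gp := mk_nonneg _ fun ω => le_max_right _ _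
    have hp2 : (0 : Ω →ₘ[μ] ℝ) ≤ gm := mk_nonneg _ fun ω => le_max_right _ _
    have hsplit : (AEEqFun.mk g hg.aestronglyMeasurable : Ω →ₘ[μ] ℝ) = gp - gm := by
      apply AEEqFun.ext
      filter_upwards [AEEqFun.coeFn_mk g hg.aestronglyMeasurable,
        AEEqFun.coeFn_sub gp gm,
        AEEqFun.coeFn_mk (fun ω => max (g ω) 0) ((hg.max measurable_const).aestronglyMeasurable),
        AEEqFun.coeFn_mk (fun ω => max (-g ω) 0)
          ((hg.neg.max measurable_const).aestronglyMeasurable)] with ω w1 w2 w3 w4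
      rw [w1, w2, Pi.sub_apply, w3, w4, max_zero_sub_max_neg_zero_eq_self]
    have hxsplit : (AEEqFun.mk g hg.aestronglyMeasurable : Ω →ₘ[μ] ℝ) • x
        = gp • x + gm • (-x) := by
      rw [hsplit, sub_smul, smul_neg, sub_eq_add_neg]
    calc f ((AEEqFun.mk g hg.aestronglyMeasurable : Ω →ₘ[μ] ℝ) • x)
        = f (gp • x) + f (gm • (-x)) := by rw [hxsplit, hf_add]
      _ ≤ gp * p x + gm * p (-x) := by
          refine add_le_add' ((hfp _).trans (hp_smul gp hp1 x).le)
            ((hfp _).trans (hp_smul gm hp2 (-x)).le)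
  -- Step 5: limiting argument
  intro ξ x
  have am : AEMeasurable (⇑ξ) μ := ξ.aestronglyMeasurable.aemeasurable
  set g : Ω → ℝ := am.mk ⇑ξ with hgdef
  have hgm : Measurable g := am.measurable_mk
  have hξ : ξ = (AEEqFun.mk g hgm.aestronglyMeasurable : Ω →ₘ[μ] ℝ) :=
    AEEqFun.ext (am.ae_eq_mk.trans (AEEqFun.coeFn_mk g hgm.aestronglyMeasurable).symm)
  let φ : ℕ → SimpleFunc Ω ℝ := fun n =>
    SimpleFunc.approxOn g hgm Set.univ 0 (Set.mem_univ 0) n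
  set D : Ω →ₘ[μ] ℝ := f (ξ • x) - ξ * f x with hDdef
  -- the difference rewritten through the n-th approximation
  set gn : ℕ → Ω → ℝ := fun n ω => g ω - φ n ω with hgndef
  have hgnm : ∀ n, Measurable (gn n) := fun n => hgm.sub (φ n).measurable
  set ζ : ℕ → Ω →ₘ[μ] ℝ := fun n =>
    AEEqFun.mk (gn n) (hgnm n).aestronglyMeasurable with hζdef
  have hD : ∀ n, D = f (ζ n • x) - ζ n * f x := by
    intro n
    have hsum : ξ = ζ n + AEEqFun.mk ⇑(φ n) (φ n).aestronglyMeasurable := by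
      apply AEEqFun.ext
      filter_upwards [am.ae_eq_mk,
        AEEqFun.coeFn_add (ζ n) (AEEqFun.mk ⇑(φ n) (φ n).aestronglyMeasurable : Ω →ₘ[μ] ℝ),
        AEEqFun.coeFn_mk (gn n) (hgnm n).aestronglyMeasurable,
        AEEqFun.coeFn_mk ⇑(φ n) (φ n).aestronglyMeasurable] with ω w1 w2 w3 w4
      rw [w1, w2, Pi.add_apply, w3, w4]
      simp [hgndef]
      rfl
    calc D = f ((ζ n + AEEqFun.mk ⇑(φ n) (φ n).aestronglyMeasurable) • x)
        - (ζ n + AEEqFun.mk ⇑(φ n) (φ n).aestronglyMeasurable) * f x := by rw [← hsum]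
      _ = f (ζ n • x) + AEEqFun.mk ⇑(φ n) (φ n).aestronglyMeasurable * f x
          - (ζ n * f x + AEEqFun.mk ⇑(φ n) (φ n).aestronglyMeasurable * f x) := by
          rw [add_smul, hf_add, key_simple, add_mul]
      _ = f (ζ n • x) - ζ n * f x := by ring
  have hbound : ∀ n, ∀ᵐ ω ∂μ, |D ω| ≤
      |g ω - φ n ω| * (|(p x) ω| + |(p (-x)) ω| + |(f x) ω|) := by
    intro n
    have hb1 := key_bound (gn n) (hgnm n) x
    have hb2 := key_bound (fun ω => -(gn n ω)) (hgnm n).neg x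
    have hneg : (AEEqFun.mk (fun ω => -(gn n ω)) (hgnm n).neg.aestronglyMeasurable : Ω →ₘ[μ] ℝ)
        = -(ζ n) := by
      apply AEEqFun.ext
      filter_upwards [AEEqFun.coeFn_mk (fun ω => -(gn n ω)) (hgnm n).neg.aestronglyMeasurable,
        AEEqFun.coeFn_neg (ζ n),
        AEEqFun.coeFn_mk (gn n) (hgnm n).aestronglyMeasurable] with ω w1 w2 w3
      rw [w1, w2, Pi.neg_apply, w3]
    rw [hneg, neg_smul, hfneg] at hb2
    have hDc := AEEqFun.coeFn_sub (f (ζ n • x)) (ζ n * f x)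
    rw [← hD n] at hDc
    filter_upwards [AEEqFun.coeFn_le.2 hb1, AEEqFun.coeFn_le.2 hb2,
      AEEqFun.coeFn_add ((AEEqFun.mk (fun ω => max (gn n ω) 0)
          (((hgnm n).max measurable_const).aestronglyMeasurable) : Ω →ₘ[μ] ℝ) * p x)
        ((AEEqFun.mk (fun ω => max (-gn n ω) 0)
          (((hgnm n).neg.max measurable_const).aestronglyMeasurable) : Ω →ₘ[μ] ℝ) * p (-x)),
      AEEqFun.coeFn_mul (AEEqFun.mk (fun ω => max (gn n ω) 0)
          (((hgnm n).max measurable_const).aestronglyMeasurable) : Ω →ₘ[μ] ℝ) (p x),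
      AEEqFun.coeFn_mul (AEEqFun.mk (fun ω => max (-gn n ω) 0)
          (((hgnm n).neg.max measurable_const).aestronglyMeasurable) : Ω →ₘ[μ] ℝ) (p (-x)),
      AEEqFun.coeFn_mk (fun ω => max (gn n ω) 0)
        (((hgnm n).max measurable_const).aestronglyMeasurable),
      AEEqFun.coeFn_mk (fun ω => max (-gn n ω) 0)
        (((hgnm n).neg.max measurable_const).aestronglyMeasurable),
      AEEqFun.coeFn_add ((AEEqFun.mk (fun ω => max (-(gn n ω)) 0)
          (((hgnm n).neg.max measurable_const).aestronglyMeasurable) : Ω →ₘ[μ] ℝ) * p x)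
        ((AEEqFun.mk (fun ω => max (-(-(gn n ω))) 0)
          (((hgnm n).neg.neg.max measurable_const).aestronglyMeasurable) : Ω →ₘ[μ] ℝ) * p (-x)),
      AEEqFun.coeFn_mul (AEEqFun.mk (fun ω => max (-(gn n ω)) 0)
          (((hgnm n).neg.max measurable_const).aestronglyMeasurable) : Ω →ₘ[μ] ℝ) (p x),
      AEEqFun.coeFn_mul (AEEqFun.mk (fun ω => max (-(-(gn n ω))) 0)
          (((hgnm n).neg.neg.max measurable_const).aestronglyMeasurable) : Ω →ₘ[μ] ℝ) (p (-x)),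
      AEEqFun.coeFn_mk (fun ω => max (-(gn n ω)) 0)
        (((hgnm n).neg.max measurable_const).aestronglyMeasurable),
      AEEqFun.coeFn_mk (fun ω => max (-(-(gn n ω))) 0)
        (((hgnm n).neg.neg.max measurable_const).aestronglyMeasurable),
      AEEqFun.coeFn_neg (f (ζ n • x)), hDc,
      AEEqFun.coeFn_mul (ζ n) (f x),
      AEEqFun.coeFn_mk (gn n) (hgnm n).aestronglyMeasurable]
      with ω w1 w2 w3 w4 w5 w6 w7 w8 w9 w10 w11 w12 w13 w14 w15 w16
    rw [w3, Pi.add_apply, w4, w5, Pi.mul_apply, Pi.mul_apply, w6, w7] at w1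
    rw [w13, Pi.neg_apply] at w2
    rw [w8, Pi.add_apply, w9, w10, Pi.mul_apply, Pi.mul_apply, w11, w12] at w2
    rw [w14, Pi.sub_apply, w15, Pi.mul_apply, w16]
    simp only [neg_neg] at w2
    have hgneq : gn n ω = g ω - φ n ω := rfl
    rw [hgneq] at w1 w2 ⊢
    exact real_est _ _ _ _ _ w1 w2
  have haeall : ∀ᵐ ω ∂μ, ∀ n, |D ω| ≤
      |g ω - φ n ω| * (|(p x) ω| + |(p (-x)) ω| + |(f x) ω|) := ae_all_iff.2 hbound
  have hD0 : D = 0 := by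
    apply AEEqFun.ext
    filter_upwards [haeall, AEEqFun.coeFn_zero (β := ℝ) (μ := μ)] with ω hω h0
    rw [h0, Pi.zero_apply]
    have htd : Tendsto (fun n => φ n ω) atTop (nhds (g ω)) :=
      SimpleFunc.tendsto_approxOn hgm (Set.mem_univ 0) (by simp)
    have htd2 : Tendsto (fun n => |g ω - φ n ω| *
        (|(p x) ω| + |(p (-x)) ω| + |(f x) ω|)) atTop (nhds 0) := by
      have h1 : Tendsto (fun n => g ω - φ n ω) atTop (nhds 0) := by
        have := (tendsto_const_nhds (α := ℕ) (x := g ω) (f := atTop)).sub htd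
        simpa using this
      have h2 := h1.abs.mul_const (|(p x) ω| + |(p (-x)) ω| + |(f x) ω|)
      simpa using h2
    have hle : |D ω| ≤ 0 := ge_of_tendsto htd2 (Eventually.of_forall fun n => hω n)
    exact abs_eq_zero.mp (le_antisymm hle (abs_nonneg _))
  rw [hDdef] at hD0
  exact sub_eq_zero.mp hD0
end

section
/- Let E be a real linear space, M ⊆ E a linear subspace, p : E → L⁰(F,ℝ) a random sublinear functional (p(αx)=αp(x) for α ≥ 0 real, p(x+y) ≤ p(x)+p(y)), and f : M → L⁰(F,ℝ) a real linear map with f(x) ≤ p(x) for all x ∈ M. Then there exists a real linear map g : E → L⁰(F,ℝ) extending f with g(x) ≤ p(x) for all x ∈ E. -/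
open MeasureTheory

variable {Ω : Type*} [MeasurableSpace Ω] {μ : MeasureTheory.Measure Ω}

/-! ### Auxiliary order lemmas for `L⁰ = Ω →ₘ[μ] ℝ` -/

namespace L0Aux

open Real Filter Set

variable {Ω : Type*} [MeasurableSpace Ω] {μ : Measure Ω}

/-- `L⁰` is an ordered additive group. -/
noncomputable instance : IsOrderedAddMonoid (Ω →ₘ[μ] ℝ) :=
  { add_le_add_left := by
      intro f g hfg h
      rw [← AEEqFun.coeFn_le] at hfg ⊢
      filter_upwards [hfg, AEEqFun.coeFn_add f h, AEEqFun.coeFn_add g h] with ω h1 h2 h3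
      simp only [h2, h3, Pi.add_apply]
      linarith }

theorem smul_mono {a : ℝ} (ha : 0 ≤ a) {f g : Ω →ₘ[μ] ℝ} (h : f ≤ g) : a • f ≤ a • g := by
  rw [← AEEqFun.coeFn_le] at h ⊢
  filter_upwards [h, AEEqFun.coeFn_smul a f, AEEqFun.coeFn_smul a g] with ω h1 h2 h3
  simp only [h2, h3, Pi.smul_apply, smul_eq_mul]
  exact mul_le_mul_of_nonneg_left h1 ha

/-- The "test functional" `Φ(f) = ∫ arctan ∘ f`. -/
noncomputable def Phi (f : Ω →ₘ[μ] ℝ) : ℝ := ∫ ω, Real.arctan (f ω) ∂μ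

theorem integrable_arctan [IsFiniteMeasure μ] {f : Ω → ℝ} (hf : AEStronglyMeasurable f μ) :
    Integrable (fun ω => Real.arctan (f ω)) μ := by
  refine ⟨Real.continuous_arctan.comp_aestronglyMeasurable hf, ?_⟩
  refine HasFiniteIntegral.of_bounded (C := Real.pi / 2) (ae_of_all _ fun ω => ?_)
  rw [Real.norm_eq_abs]
  exact abs_le.2 ⟨(Real.neg_pi_div_two_lt_arctan _).le, (Real.arctan_lt_pi_div_two _).le⟩

theorem norm_arctan_le (x : ℝ) : ‖Real.arctan x‖ ≤ Real.pi / 2 := by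
  rw [Real.norm_eq_abs]
  exact abs_le.2 ⟨(Real.neg_pi_div_two_lt_arctan _).le, (Real.arctan_lt_pi_div_two _).le⟩

theorem Phi_mono [IsFiniteMeasure μ] {f g : Ω →ₘ[μ] ℝ} (h : f ≤ g) : Phi f ≤ Phi g := by
  refine integral_mono_ae (integrable_arctan f.aestronglyMeasurable)
    (integrable_arctan g.aestronglyMeasurable) ?_
  filter_upwards [AEEqFun.coeFn_le.2 h] with ω hω
  exact Real.arctan_strictMono.monotone hω

theorem eq_of_le_of_Phi_le [IsFiniteMeasure μ] {f g : Ω →ₘ[μ] ℝ} (hle : f ≤ g)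
    (h : Phi g ≤ Phi f) : f = g := by
  have hif : Integrable (fun ω => Real.arctan (f ω)) μ :=
    integrable_arctan f.aestronglyMeasurable
  have hig : Integrable (fun ω => Real.arctan (g ω)) μ :=
    integrable_arctan g.aestronglyMeasurable
  have hae : ∀ᵐ ω ∂μ, f ω ≤ g ω := AEEqFun.coeFn_le.2 hle
  have h0 : (0 : Ω → ℝ) ≤ᵐ[μ] fun ω => Real.arctan (g ω) - Real.arctan (f ω) := by
    filter_upwards [hae] with ω hω
    simpa using sub_nonneg.2 (Real.arctan_strictMono.monotone hω)
  have hint : Integrable (fun ω => Real.arctan (g ω) - Real.arctan (f ω)) μ := hig.sub hif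
  have hz : ∫ ω, (Real.arctan (g ω) - Real.arctan (f ω)) ∂μ = 0 := by
    rw [integral_sub hig hif]
    have : Phi f ≤ Phi g := Phi_mono hle
    have : Phi g = Phi f := le_antisymm h this
    simpa [Phi] using sub_eq_zero.2 this
  have := (integral_eq_zero_iff_of_nonneg_ae h0 hint).1 hz
  refine AEEqFun.ext ?_
  filter_upwards [this] with ω hω
  have h' : Real.arctan (g ω) - Real.arctan (f ω) = 0 := hω
  exact Real.arctan_injective (by linarith : Real.arctan (f ω) = Real.arctan (g ω))

/-- **Dedekind completeness of `L⁰`** over a finite measure: every nonempty set bounded above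
has a least upper bound. -/
theorem exists_isLUB [IsFiniteMeasure μ] (S : Set (Ω →ₘ[μ] ℝ)) (hne : S.Nonempty)
    (hbdd : BddAbove S) : ∃ g : Ω →ₘ[μ] ℝ, IsLUB S g := by
  classical
  obtain ⟨b, hb⟩ := hbdd
  -- the sup-closure of `S`
  set T : Set (Ω →ₘ[μ] ℝ) := supClosure S with hT
  have hTne : T.Nonempty := hne.mono subset_supClosure
  have hbT : b ∈ upperBounds T := by
    rw [hT, upperBounds_supClosure]; exact hb
  set c : ℝ := sSup (Phi '' T) with hc
  have hPne : (Phi '' T).Nonempty := hTne.image _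
  have hPbdd : BddAbove (Phi '' T) := by
    refine ⟨Phi b, ?_⟩
    rintro _ ⟨t, htT, rfl⟩
    exact Phi_mono (hbT htT)
  have hex : ∀ n : ℕ, ∃ t ∈ T, c - 1 / (n + 1) < Phi t := by
    intro n
    have hlt : c - 1 / (n + 1) < c := by
      have : (0 : ℝ) < 1 / (n + 1) := by positivity
      linarith
    obtain ⟨a, ⟨t, htT, rfl⟩, hat⟩ := exists_lt_of_lt_csSup hPne hlt
    exact ⟨t, htT, hat⟩
  choose t htT htlt using hex
  -- increasing sequence of finite sups
  set h : ℕ → (Ω →ₘ[μ] ℝ) := fun n => (Finset.range (n + 1)).sup' (by simp) t with hh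
  have hhT : ∀ n, h n ∈ T :=
    fun n => supClosed_supClosure.finsetSup'_mem _ fun i _ => htT i
  have hmono : Monotone h := by
    intro m n hmn
    exact Finset.sup'_mono t (Finset.range_subset_range.2 (by omega)) (by simp)
  have hhb : ∀ n, h n ≤ b := fun n => Finset.sup'_le _ _ fun i _ => hbT (htT i)
  have hPhc : ∀ n, Phi (h n) ≤ c := fun n => le_csSup hPbdd ⟨h n, hhT n, rfl⟩
  have hPlt : ∀ n : ℕ, c - 1 / (n + 1) < Phi (h n) := by
    intro n
    refine lt_of_lt_of_le (htlt n) (Phi_mono ?_)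
    exact Finset.le_sup' t (by simp)
  -- the candidate supremum
  set H : Ω → ℝ := fun ω => ⨆ n, h n ω with hHdef
  have hHm : Measurable H := Measurable.iSup fun n => (h n).measurable
  set g : Ω →ₘ[μ] ℝ := AEEqFun.mk H hHm.aestronglyMeasurable with hg
  -- a.e. pointwise facts
  have hEb : ∀ᵐ ω ∂μ, ∀ n, h n ω ≤ b ω := ae_all_iff.2 fun n => AEEqFun.coeFn_le.2 (hhb n)
  have hEm : ∀ᵐ ω ∂μ, ∀ n, h n ω ≤ h (n + 1) ω :=
    ae_all_iff.2 fun n => AEEqFun.coeFn_le.2 (hmono (Nat.le_succ n))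
  have hEg : ⇑g =ᵐ[μ] H := AEEqFun.coeFn_mk _ _
  have key : ∀ᵐ ω ∂μ, (∀ n, h n ω ≤ g ω) ∧
      Filter.Tendsto (fun n => h n ω) atTop (nhds (g ω)) := by
    filter_upwards [hEb, hEm, hEg] with ω h1 h2 h3
    have hmono' : Monotone fun n => h n ω := monotone_nat_of_le_succ h2
    have hbdd' : BddAbove (Set.range fun n => h n ω) := by
      refine ⟨b ω, ?_⟩
      rintro _ ⟨n, rfl⟩
      exact h1 n
    constructor
    · intro n
      rw [h3]
      exact le_ciSup hbdd' n
    · rw [h3]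
      exact tendsto_atTop_ciSup hmono' hbdd'
  -- `Phi (h n) → Phi g`
  have htendPhi : ∀ (f₀ : Ω →ₘ[μ] ℝ) (F : ℕ → Ω →ₘ[μ] ℝ),
      (∀ᵐ ω ∂μ, Filter.Tendsto (fun n => F n ω) atTop (nhds (f₀ ω))) →
      Filter.Tendsto (fun n => Phi (F n)) atTop (nhds (Phi f₀)) := by
    intro f₀ F hconv
    refine tendsto_integral_of_dominated_convergence (fun _ => Real.pi / 2)
      (fun n => Real.continuous_arctan.comp_aestronglyMeasurable
        (F n).aestronglyMeasurable)
      (integrable_const _)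
      (fun n => ae_of_all _ fun ω => norm_arctan_le _) ?_
    filter_upwards [hconv] with ω hω
    exact (Real.continuous_arctan.tendsto _).comp hω
  have hPg : Phi g = c := by
    have h1 : Filter.Tendsto (fun n => Phi (h n)) atTop (nhds (Phi g)) :=
      htendPhi g h (key.mono fun ω hω => hω.2)
    have h2 : Filter.Tendsto (fun n => Phi (h n)) atTop (nhds c) := by
      have hlow : Filter.Tendsto (fun n : ℕ => c - 1 / (n + 1)) atTop (nhds c) := by
        simpa using (tendsto_const_nhds (x := c)).sub tendsto_one_div_add_atTop_nhds_zero_nat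
      exact tendsto_of_tendsto_of_tendsto_of_le_of_le hlow tendsto_const_nhds
        (fun n => (hPlt n).le) hPhc
    exact tendsto_nhds_unique h1 h2
  refine ⟨g, ?_, ?_⟩
  · -- upper bound
    intro f hfS
    have hfc : ∀ n, Phi (f ⊔ h n) ≤ c := fun n =>
      le_csSup hPbdd ⟨f ⊔ h n, supClosed_supClosure (subset_supClosure hfS) (hhT n), rfl⟩
    have hconv : ∀ᵐ ω ∂μ, Filter.Tendsto (fun n => (f ⊔ h n) ω) atTop (nhds ((f ⊔ g) ω)) := by
      have hsupn : ∀ᵐ ω ∂μ, ∀ n, (f ⊔ h n) ω = max (f ω) (h n ω) :=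
        ae_all_iff.2 fun n => (AEEqFun.coeFn_sup f (h n)).mono fun ω hω => hω
      filter_upwards [hsupn, AEEqFun.coeFn_sup f g, key.mono fun ω hω => hω.2]
        with ω h1 h2 h3
      have : Filter.Tendsto (fun n => max (f ω) (h n ω)) atTop
          (nhds (max (f ω) (g ω))) := tendsto_const_nhds.max h3
      simpa only [h2, fun n => h1 n] using this
    have hlim : Filter.Tendsto (fun n => Phi (f ⊔ h n)) atTop (nhds (Phi (f ⊔ g))) :=
      htendPhi (f ⊔ g) (fun n => f ⊔ h n) hconv
    have hle : Phi (f ⊔ g) ≤ c := le_of_tendsto hlim (Filter.Eventually.of_forall hfc)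
    have : g = f ⊔ g := eq_of_le_of_Phi_le le_sup_right (by rw [hPg]; exact hle)
    exact sup_eq_right.1 this.symm
  · -- least upper bound
    intro b' hb'
    have hb'T : b' ∈ upperBounds T := by rw [hT, upperBounds_supClosure]; exact hb'
    have : ∀ᵐ ω ∂μ, ∀ n, h n ω ≤ b' ω :=
      ae_all_iff.2 fun n => AEEqFun.coeFn_le.2 (hb'T (hhT n))
    rw [← AEEqFun.coeFn_le]
    filter_upwards [this, hEg] with ω h1 h2
    rw [h2]
    exact ciSup_le h1

/-! ### One-step extension for the Hahn–Banach theorem -/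

theorem hb_step [IsFiniteMeasure μ] {E : Type*} [AddCommGroup E] [Module ℝ E]
    (p : E → Ω →ₘ[μ] ℝ)
    (hp_smul : ∀ a : ℝ, 0 ≤ a → ∀ x : E, p (a • x) = a • p x)
    (hp_add : ∀ x y : E, p (x + y) ≤ p x + p y)
    (q : E →ₗ.[ℝ] (Ω →ₘ[μ] ℝ)) (hq : ∀ x : q.domain, q x ≤ p x)
    {x₀ : E} (hx₀ : x₀ ∉ q.domain) :
    ∃ r : E →ₗ.[ℝ] (Ω →ₘ[μ] ℝ), q < r ∧ ∀ x : r.domain, r x ≤ p x := by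
  classical
  set A : Set (Ω →ₘ[μ] ℝ) := Set.range fun y : q.domain => q y - p ((y : E) - x₀) with hA
  have hkey : ∀ y z : q.domain, q y - p ((y : E) - x₀) ≤ p ((z : E) + x₀) - q z := by
    intro y z
    rw [sub_le_sub_iff]
    calc q y + q z = q (y + z) := (q.map_add y z).symm
      _ ≤ p ((y : E) + z) := hq (y + z)
      _ = p (((y : E) - x₀) + ((z : E) + x₀)) := by congr 1; abel
      _ ≤ p ((y : E) - x₀) + p ((z : E) + x₀) := hp_add _ _
      _ = p ((z : E) + x₀) + p ((y : E) - x₀) := add_comm _ _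
  have hAne : A.Nonempty := ⟨_, 0, rfl⟩
  have hAbdd : BddAbove A := by
    refine ⟨p ((0 : q.domain) + x₀) - q 0, ?_⟩
    rintro _ ⟨y, rfl⟩
    exact hkey y 0
  obtain ⟨c, hc⟩ := exists_isLUB A hAne hAbdd
  have hub : ∀ y : q.domain, q y - p ((y : E) - x₀) ≤ c := fun y => hc.1 ⟨y, rfl⟩
  have hlb : ∀ z : q.domain, c ≤ p ((z : E) + x₀) - q z := by
    intro z
    refine hc.2 ?_
    rintro _ ⟨y, rfl⟩
    exact hkey y z
  set r : E →ₗ.[ℝ] (Ω →ₘ[μ] ℝ) := q.supSpanSingleton x₀ c hx₀ with hr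
  have hrdom : r.domain = q.domain ⊔ (ℝ ∙ x₀) := rfl
  have hrapp : ∀ (m : E) (hm : m ∈ q.domain) (t : ℝ) (x : r.domain),
      (x : E) = m + t • x₀ → r x = q ⟨m, hm⟩ + t • c := by
    intro m hm t x hx
    have hx' : x = ⟨m + t • x₀,
        Submodule.mem_sup.2 ⟨m, hm, t • x₀,
          Submodule.mem_span_singleton.2 ⟨t, rfl⟩, rfl⟩⟩ := Subtype.ext hx
    rw [hx']
    exact q.supSpanSingleton_apply_mk x₀ c hx₀ m hm t
  have hqr : q ≤ r := by
    constructor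
    · rw [hrdom]; exact le_sup_left
    · intro x y hxy
      have : r y = q ⟨(x : E), x.2⟩ + (0 : ℝ) • c := by
        refine hrapp (x : E) x.2 0 y ?_
        simp [← hxy]
      simp only [zero_smul, add_zero] at this
      rw [this]
  have hlt : q < r := by
    refine lt_of_le_of_ne hqr ?_
    intro hqr'
    apply hx₀
    have : x₀ ∈ r.domain := by
      rw [hrdom]
      exact Submodule.mem_sup_right (Submodule.mem_span_singleton_self x₀)
    rw [← hqr'] at this
    exact this
  refine ⟨r, hlt, ?_⟩
  rintro ⟨xe, hxe⟩
  rw [hrdom] at hxe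
  obtain ⟨m, hm, w, hw, rfl⟩ := Submodule.mem_sup.1 hxe
  obtain ⟨t, rfl⟩ := Submodule.mem_span_singleton.1 hw
  have happ : r ⟨m + t • x₀, hxe⟩ = q ⟨m, hm⟩ + t • c := hrapp m hm t _ rfl
  rw [happ]
  rcases lt_trichotomy t 0 with ht | ht | ht
  · -- t < 0
    set s : ℝ := -t with hs
    have hs0 : 0 < s := by simp [hs]; linarith
    have h1 : q ⟨s⁻¹ • m, q.domain.smul_mem _ hm⟩ - p ((s⁻¹ • m : E) - x₀) ≤ c :=
      hub ⟨s⁻¹ • m, q.domain.smul_mem _ hm⟩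
    have h2 := smul_mono hs0.le h1
    rw [smul_sub] at h2
    have h3 : s • q ⟨s⁻¹ • m, q.domain.smul_mem _ hm⟩ = q ⟨m, hm⟩ := by
      rw [← q.map_smul]
      congr 1
      exact Subtype.ext (by simp [smul_smul, mul_inv_cancel₀ hs0.ne'])
    have h4 : s • p ((s⁻¹ • m : E) - x₀) = p (m + t • x₀) := by
      rw [← hp_smul s hs0.le]
      congr 1
      rw [smul_sub, smul_smul, mul_inv_cancel₀ hs0.ne', one_smul]
      rw [hs]
      module
    rw [h3, h4] at h2
    -- h2 : q ⟨m, hm⟩ - p (m + t • x₀) ≤ s • c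
    have h5 : s • c = -(t • c) := by rw [hs, neg_smul]
    rw [h5, sub_le_iff_le_add] at h2
    -- h2 : q ⟨m, hm⟩ ≤ -(t • c) + p (m + t • x₀)
    calc q ⟨m, hm⟩ + t • c ≤ (-(t • c) + p (m + t • x₀)) + t • c := add_le_add_left h2 _
      _ = p (m + t • x₀) := by abel
  · -- t = 0
    subst ht
    simpa using hq ⟨m, hm⟩
  · -- t > 0
    have h1 : c ≤ p ((t⁻¹ • m : E) + x₀) - q ⟨t⁻¹ • m, q.domain.smul_mem _ hm⟩ :=
      hlb ⟨t⁻¹ • m, q.domain.smul_mem _ hm⟩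
    have h2 := smul_mono ht.le h1
    rw [smul_sub] at h2
    have h3 : t • q ⟨t⁻¹ • m, q.domain.smul_mem _ hm⟩ = q ⟨m, hm⟩ := by
      rw [← q.map_smul]
      congr 1
      exact Subtype.ext (by simp [smul_smul, mul_inv_cancel₀ ht.ne'])
    have h4 : t • p ((t⁻¹ • m : E) + x₀) = p (m + t • x₀) := by
      rw [← hp_smul t ht.le]
      congr 1
      rw [smul_add, smul_smul, mul_inv_cancel₀ ht.ne', one_smul]
    rw [h3, h4] at h2
    -- h2 : t • c ≤ p (m + t • x₀) - q ⟨m, hm⟩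
    rw [le_sub_iff_add_le] at h2
    calc q ⟨m, hm⟩ + t • c = t • c + q ⟨m, hm⟩ := by abel
      _ ≤ p (m + t • x₀) := h2

end L0Aux

/-- **Theorem 2.1 (Hahn–Banach for random linear functionals, real case).** Let `E` be a real
linear space, `M ⊆ E` a linear subspace, `p : E → L⁰(F,ℝ)` a random sublinear functional and
`f : M → L⁰(F,ℝ)` a real linear map with `f ≤ p` on `M`. Then `f` extends to a real linear map
`g : E → L⁰(F,ℝ)` with `g ≤ p`. -/
theorem random_hahn_banach_real {Ω : Type*} [MeasurableSpace Ω] (μ : Measure Ω)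
    [IsProbabilityMeasure μ] (E : Type*) [AddCommGroup E] [Module ℝ E]
    (M : Submodule ℝ E) (p : E → Ω →ₘ[μ] ℝ)
    (hp_smul : ∀ a : ℝ, 0 ≤ a → ∀ x : E, p (a • x) = a • p x)
    (hp_add : ∀ x y : E, p (x + y) ≤ p x + p y)
    (f : M →ₗ[ℝ] Ω →ₘ[μ] ℝ)
    (hfp : ∀ m : M, f m ≤ p (m : E)) :
    ∃ g : E →ₗ[ℝ] Ω →ₘ[μ] ℝ,
      (∀ m : M, g (m : E) = f m) ∧ ∀ x : E, g x ≤ p x := by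
  classical
  set f₀ : E →ₗ.[ℝ] (Ω →ₘ[μ] ℝ) := ⟨M, f⟩ with hf₀
  set S : Set (E →ₗ.[ℝ] (Ω →ₘ[μ] ℝ)) := { q | ∀ x : q.domain, q x ≤ p x } with hS
  have hSc : ∀ c ⊆ S, IsChain (· ≤ ·) c → ∀ y ∈ c, ∃ ub ∈ S, ∀ z ∈ c, z ≤ ub := by
    intro c hcs c_chain y hy
    have cne : c.Nonempty := ⟨y, hy⟩
    have hcd : DirectedOn (· ≤ ·) c := c_chain.directedOn
    refine ⟨LinearPMap.sSup c hcd, ?_, fun _ => LinearPMap.le_sSup hcd⟩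
    rintro ⟨x, hx⟩
    have hdir : DirectedOn (· ≤ ·) (LinearPMap.domain '' c) :=
      directedOn_image.2 (hcd.mono LinearPMap.domain_mono.monotone)
    rcases (Submodule.mem_sSup_of_directed (cne.image _) hdir).1 hx with ⟨_, ⟨q, hqc, rfl⟩, hqx⟩
    have hle : q ≤ LinearPMap.sSup c hcd := LinearPMap.le_sSup _ hqc
    have := hle.2 (x := ⟨x, hqx⟩) (y := ⟨x, hx⟩) rfl
    rw [← this]
    exact hcs hqc ⟨x, hqx⟩
  have hf₀S : f₀ ∈ S := fun x => hfp x
  obtain ⟨q, hf₀q, hqmax⟩ := zorn_le_nonempty₀ S hSc f₀ hf₀S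
  obtain ⟨hqS, hle10⟩ := hqmax
  have hqtop : q.domain = ⊤ := by
    by_contra hne
    obtain ⟨x₀, hx₀⟩ : ∃ x₀, x₀ ∉ q.domain := by
      by_contra hall
      push_neg at hall
      exact hne (Submodule.eq_top_iff'.2 hall)
    obtain ⟨r, hqr, hrS⟩ := L0Aux.hb_step p hp_smul hp_add q hqS hx₀
    exact (not_le_of_gt hqr) (hle10 hrS hqr.le)
  -- build the global linear map
  obtain ⟨qdom, qmap⟩ := q
  simp only [LinearPMap.mk_apply] at *
  subst hqtop
  refine ⟨qmap.comp (LinearMap.id.codRestrict ⊤ fun _ => trivial), ?_, ?_⟩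
  · intro m
    have := hf₀q.2 (x := m) (y := ⟨(m : E), trivial⟩) rfl
    exact this.symm
  · intro x
    exact hqS ⟨x, trivial⟩
end

section
/- Let E be a complex linear space, M ⊆ E a complex linear subspace, p : E → L⁰₊ a random seminorm (p(αx)=|α|p(x) for α ∈ ℂ, p(x+y) ≤ p(x)+p(y)), and f : M → L⁰(F,ℂ) a complex linear map with |f(x)| ≤ p(x) for all x ∈ M. Then there exists a complex linear map g : E → L⁰(F,ℂ) extending f with |g(x)| ≤ p(x) for all x ∈ E. -/
open MeasureTheory

variable {Ω : Type*} [MeasurableSpace Ω] {μ : MeasureTheory.Measure Ω}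

/-- The pointwise modulus `|ξ|` of an element of `L⁰(F,𝕜)`, as an element of `L⁰(F,ℝ)`. -/
noncomputable def L0.abs {Ω : Type*} [MeasurableSpace Ω] {μ : Measure Ω} {𝕜 : Type*}
    [RCLike 𝕜] (ξ : Ω →ₘ[μ] 𝕜) : Ω →ₘ[μ] ℝ :=
  AEEqFun.comp (fun z => ‖z‖) continuous_norm ξ

section Aux

open Filter Real Submodule LinearMap

instance L0.instCovariantAdd :
    CovariantClass (Ω →ₘ[μ] ℝ) (Ω →ₘ[μ] ℝ) (· + ·) (· ≤ ·) := by
  constructor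
  intro c a b hab
  rw [← AEEqFun.coeFn_le] at hab ⊢
  filter_upwards [hab, AEEqFun.coeFn_add c a, AEEqFun.coeFn_add c b] with ω h1 h2 h3
  simp only [h2, h3, Pi.add_apply]
  exact add_le_add_right h1 _

instance L0.instCovariantAddSwap :
    CovariantClass (Ω →ₘ[μ] ℝ) (Ω →ₘ[μ] ℝ) (Function.swap (· + ·)) (· ≤ ·) := by
  constructor
  intro c a b hab
  simp only [Function.swap, add_comm _ c]
  exact add_le_add_right (α := Ω →ₘ[μ] ℝ) hab c

lemma L0.smul_le_smul {t : ℝ} (ht : 0 ≤ t) {a b : Ω →ₘ[μ] ℝ} (h : a ≤ b) :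
    t • a ≤ t • b := by
  rw [← AEEqFun.coeFn_le] at h ⊢
  filter_upwards [h, AEEqFun.coeFn_smul t a, AEEqFun.coeFn_smul t b] with ω h1 h2 h3
  simp only [h2, h3, Pi.smul_apply, smul_eq_mul]
  exact mul_le_mul_of_nonneg_left h1 ht


lemma L0.arctan_integrable [IsProbabilityMeasure μ] (g : Ω → ℝ)
    (hg : AEStronglyMeasurable g μ) :
    Integrable (fun ω => Real.arctan (g ω)) μ := by
  refine (integrable_const (π/2)).mono'
    (Real.continuous_arctan.comp_aestronglyMeasurable hg) (ae_of_all _ fun ω => ?_)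
  rw [Real.norm_eq_abs, abs_le]
  exact ⟨(Real.neg_pi_div_two_lt_arctan _).le, (Real.arctan_lt_pi_div_two _).le⟩

lemma L0.exists_lub [IsProbabilityMeasure μ] (S : Set (Ω →ₘ[μ] ℝ)) (hne : S.Nonempty)
    {b : Ω →ₘ[μ] ℝ} (hb : b ∈ upperBounds S) :
    ∃ z : Ω →ₘ[μ] ℝ, z ∈ upperBounds S ∧ ∀ c ∈ upperBounds S, z ≤ c := by
  classical
  -- the sup-closure of `S`
  set D : Set (Ω →ₘ[μ] ℝ) := supClosure S with hD
  have hSD : S ⊆ D := subset_supClosure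
  have hub : ∀ c, c ∈ upperBounds S → ∀ a ∈ D, a ≤ c := by
    intro c hc a ha
    have hclosed : SupClosed {x : Ω →ₘ[μ] ℝ | x ≤ c} := fun x hx y hy => show x ⊔ y ≤ c from sup_le hx hy
    have : D ⊆ {x : Ω →ₘ[μ] ℝ | x ≤ c} := by
      rw [hD, ← hclosed.supClosure_eq]
      exact supClosure_mono (fun x hx => hc hx)
    exact this ha
  have hDne : D.Nonempty := hne.mono hSD
  -- the auxiliary functional
  set Φ : (Ω →ₘ[μ] ℝ) → ℝ := fun a => ∫ ω, Real.arctan (a ω) ∂μ with hΦ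
  have hΦmono : ∀ {x y : Ω →ₘ[μ] ℝ}, x ≤ y → Φ x ≤ Φ y := by
    intro x y hxy
    refine integral_mono_ae (L0.arctan_integrable _ x.aestronglyMeasurable)
      (L0.arctan_integrable _ y.aestronglyMeasurable) ?_
    filter_upwards [AEEqFun.coeFn_le.2 hxy] with ω h
    exact Real.arctan_strictMono.monotone h
  have hbdd : BddAbove (Φ '' D) := by
    refine ⟨Φ b, ?_⟩
    rintro - ⟨a, ha, rfl⟩
    exact hΦmono (hub b hb a ha)
  set r : ℝ := sSup (Φ '' D) with hr
  -- a sequence approaching the sup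
  have hseq : ∀ n : ℕ, ∃ a ∈ D, r - 1/(n+1) < Φ a := by
    intro n
    have h1 : r - 1/(n+1) < r := by
      have : (0:ℝ) < 1/(n+1) := by positivity
      linarith
    obtain ⟨y, ⟨a, ha, rfl⟩, hy2⟩ := exists_lt_of_lt_csSup (hDne.image Φ) h1
    exact ⟨a, ha, hy2⟩
  choose a ha haΦ using hseq
  -- partial sups
  set u : ℕ → (Ω →ₘ[μ] ℝ) := fun n => Nat.rec (a 0) (fun k uk => uk ⊔ a (k+1)) n with hu
  have hu_succ : ∀ n, u (n+1) = u n ⊔ a (n+1) := fun n => rfl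
  have huD : ∀ n, u n ∈ D := by
    intro n
    induction n with
    | zero => exact ha 0
    | succ k ih => exact supClosed_supClosure ih (ha (k+1))
  have hu_mono : ∀ n, u n ≤ u (n+1) := fun n => by rw [hu_succ]; exact le_sup_left
  have hau : ∀ n, a n ≤ u n := by
    intro n
    cases n with
    | zero => exact le_rfl
    | succ k => rw [hu_succ]; exact le_sup_right
  have huΦ_le : ∀ n, Φ (u n) ≤ r := fun n => le_csSup hbdd ⟨u n, huD n, rfl⟩
  have huΦ_tendsto : Tendsto (fun n => Φ (u n)) atTop (nhds r) := by
    refine tendsto_of_tendsto_of_tendsto_of_le_of_le (g := fun n : ℕ => r - 1/(n+1))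
      (h := fun _ : ℕ => r) ?_ tendsto_const_nhds
      (fun n => ((haΦ n).trans_le (hΦmono (hau n))).le) (fun n => huΦ_le n)
    have := tendsto_one_div_add_atTop_nhds_zero_nat (𝕜 := ℝ)
    have h2 := (tendsto_const_nhds (x := r) (f := atTop (α := ℕ))).sub this
    simpa using h2
  -- pointwise construction of the candidate supremum
  set w : ℕ → Ω → ℝ := fun n => (u n : Ω → ℝ) with hw
  have hwmeas : ∀ n, Measurable (w n) := fun n => (u n).stronglyMeasurable.measurable
  set zf : Ω → ℝ := fun ω => ⨆ n, w n ω with hzf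
  have hzfmeas : Measurable zf := Measurable.iSup hwmeas
  set z : Ω →ₘ[μ] ℝ := AEEqFun.mk zf hzfmeas.aestronglyMeasurable with hz
  -- a.e. facts
  have hmono_ae : ∀ᵐ ω ∂μ, ∀ n, w n ω ≤ w (n+1) ω := by
    rw [ae_all_iff]
    exact fun n => AEEqFun.coeFn_le.2 (hu_mono n)
  have hbd_ae : ∀ᵐ ω ∂μ, ∀ n, w n ω ≤ (b : Ω → ℝ) ω := by
    rw [ae_all_iff]
    exact fun n => AEEqFun.coeFn_le.2 (hub b hb (u n) (huD n))
  have hgood : ∀ᵐ ω ∂μ, Monotone (fun n => w n ω) ∧ BddAbove (Set.range fun n => w n ω) := by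
    filter_upwards [hmono_ae, hbd_ae] with ω h1 h2
    exact ⟨monotone_nat_of_le_succ h1, ⟨(b : Ω → ℝ) ω, by rintro - ⟨n, rfl⟩; exact h2 n⟩⟩
  have htends_ae : ∀ᵐ ω ∂μ, Tendsto (fun n => w n ω) atTop (nhds (zf ω)) := by
    filter_upwards [hgood] with ω ⟨h1, h2⟩
    exact tendsto_atTop_ciSup h1 h2
  -- z is an upper bound for all the u n
  have hz_ub_u : ∀ n, u n ≤ z := by
    intro n
    rw [← AEEqFun.coeFn_le]
    filter_upwards [hgood, AEEqFun.coeFn_mk zf hzfmeas.aestronglyMeasurable] with ω ⟨h1, h2⟩ h3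
    rw [hz, h3]
    exact le_ciSup h2 n
  -- z is below any upper bound of S
  have hz_least : ∀ c ∈ upperBounds S, z ≤ c := by
    intro c hc
    rw [← AEEqFun.coeFn_le]
    have : ∀ᵐ ω ∂μ, ∀ n, w n ω ≤ (c : Ω → ℝ) ω := by
      rw [ae_all_iff]
      exact fun n => AEEqFun.coeFn_le.2 (hub c hc (u n) (huD n))
    filter_upwards [this, AEEqFun.coeFn_mk zf hzfmeas.aestronglyMeasurable] with ω h1 h2
    rw [hz, h2]
    exact ciSup_le h1
  -- the integral of arctan ∘ zf equals r
  have hDCT : Tendsto (fun n => ∫ ω, Real.arctan (w n ω) ∂μ) atTop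
      (nhds (∫ ω, Real.arctan (zf ω) ∂μ)) := by
    refine tendsto_integral_of_dominated_convergence (fun _ => π/2)
      (fun n => (Real.continuous_arctan.comp_aestronglyMeasurable
        (u n).aestronglyMeasurable)) (integrable_const _) (fun n => ae_of_all _ fun ω => ?_) ?_
    · rw [Real.norm_eq_abs, abs_le]
      exact ⟨(Real.neg_pi_div_two_lt_arctan _).le, (Real.arctan_lt_pi_div_two _).le⟩
    · filter_upwards [htends_ae] with ω h
      exact (Real.continuous_arctan.continuousAt.tendsto.comp h)
  have hzint : (∫ ω, Real.arctan (zf ω) ∂μ) = r :=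
    tendsto_nhds_unique hDCT huΦ_tendsto
  refine ⟨z, ?_, hz_least⟩
  -- the main point: z is an upper bound of S
  intro x hx
  set A : Ω → ℝ := (x : Ω → ℝ) with hA
  have hvD : ∀ n, x ⊔ u n ∈ D := fun n => supClosed_supClosure (hSD hx) (huD n)
  have hvint : ∀ n, (∫ ω, Real.arctan (A ω ⊔ w n ω) ∂μ) = Φ (x ⊔ u n) := by
    intro n
    refine integral_congr_ae ?_
    filter_upwards [AEEqFun.coeFn_sup x (u n)] with ω h
    rw [h]
  have hvmeas : ∀ n, AEStronglyMeasurable (fun ω => A ω ⊔ w n ω) μ :=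
    fun n => x.aestronglyMeasurable.sup (u n).aestronglyMeasurable
  have hDCT2 : Tendsto (fun n => ∫ ω, Real.arctan (A ω ⊔ w n ω) ∂μ) atTop
      (nhds (∫ ω, Real.arctan (A ω ⊔ zf ω) ∂μ)) := by
    refine tendsto_integral_of_dominated_convergence (fun _ => π/2)
      (fun n => Real.continuous_arctan.comp_aestronglyMeasurable (hvmeas n))
      (integrable_const _) (fun n => ae_of_all _ fun ω => ?_) ?_
    · rw [Real.norm_eq_abs, abs_le]
      exact ⟨(Real.neg_pi_div_two_lt_arctan _).le, (Real.arctan_lt_pi_div_two _).le⟩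
    · filter_upwards [htends_ae] with ω h
      exact (Real.continuous_arctan.continuousAt.tendsto.comp
        ((continuous_sup.comp (Continuous.prodMk_right (A ω))).continuousAt.tendsto.comp h))
  have hle_r : (∫ ω, Real.arctan (A ω ⊔ zf ω) ∂μ) ≤ r := by
    refine le_of_tendsto hDCT2 (Eventually.of_forall fun n => ?_)
    rw [hvint n]
    exact le_csSup hbdd ⟨x ⊔ u n, hvD n, rfl⟩
  have hge : (∫ ω, Real.arctan (zf ω) ∂μ) ≤ ∫ ω, Real.arctan (A ω ⊔ zf ω) ∂μ := by
    refine integral_mono (L0.arctan_integrable _ hzfmeas.aestronglyMeasurable)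
      (L0.arctan_integrable _ (x.aestronglyMeasurable.sup hzfmeas.aestronglyMeasurable))
      (fun ω => ?_)
    exact Real.arctan_strictMono.monotone le_sup_right
  have heq : (∫ ω, Real.arctan (zf ω) ∂μ) = ∫ ω, Real.arctan (A ω ⊔ zf ω) ∂μ :=
    le_antisymm hge (by rw [hzint]; exact hle_r)
  have hae : (fun ω => Real.arctan (zf ω)) =ᵐ[μ] fun ω => Real.arctan (A ω ⊔ zf ω) :=
    (integral_eq_iff_of_ae_le (L0.arctan_integrable _ hzfmeas.aestronglyMeasurable)
      (L0.arctan_integrable (fun ω => A ω ⊔ zf ω)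
        (by exact x.aestronglyMeasurable.sup hzfmeas.aestronglyMeasurable))
      (ae_of_all _ fun ω => Real.arctan_strictMono.monotone le_sup_right)).1 heq
  rw [← AEEqFun.coeFn_le]
  filter_upwards [hae, AEEqFun.coeFn_mk zf hzfmeas.aestronglyMeasurable] with ω h1 h2
  rw [hz, h2]
  have := Real.arctan_injective h1
  exact le_of_sup_eq this.symm


variable [IsProbabilityMeasure μ] {E : Type*} [AddCommGroup E] [Module ℝ E]

theorem L0.hb_step (p : E → Ω →ₘ[μ] ℝ)
    (hp_smul : ∀ (t : ℝ), 0 < t → ∀ x, p (t • x) = t • p x)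
    (hp_add : ∀ x y, p (x + y) ≤ p x + p y)
    (f : E →ₗ.[ℝ] (Ω →ₘ[μ] ℝ)) (hf : ∀ x : f.domain, f x ≤ p x) (hdom : f.domain ≠ ⊤) :
    ∃ g, f < g ∧ ∀ x : g.domain, g x ≤ p x := by
  obtain ⟨y, -, hy⟩ : ∃ y ∈ (⊤ : Submodule ℝ E), y ∉ f.domain :=
    SetLike.exists_of_lt (lt_top_iff_ne_top.2 hdom)
  set S : Set (Ω →ₘ[μ] ℝ) := Set.range (fun x : f.domain => f x - p ((x : E) - y)) with hS
  have hne : S.Nonempty := ⟨_, Set.mem_range_self (0 : f.domain)⟩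
  have hubS : ∀ x' : f.domain, (p ((x' : E) + y) - f x') ∈ upperBounds S := by
    rintro x' - ⟨x, rfl⟩
    have h1 : f x + f x' ≤ p ((x : E) - y) + p ((x' : E) + y) := by
      calc f x + f x' = f (x + x') := (f.map_add x x').symm
        _ ≤ p ((x : E) + (x' : E)) := hf _
        _ = p (((x : E) - y) + ((x' : E) + y)) := by congr 1; abel
        _ ≤ _ := hp_add _ _
    rw [sub_le_sub_iff]
    calc f x + f x' ≤ p ((x : E) - y) + p ((x' : E) + y) := h1
      _ = p ((x' : E) + y) + p ((x : E) - y) := add_comm _ _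
  obtain ⟨c, hc_ub, hc_least⟩ := L0.exists_lub S hne (hubS 0)
  have hc_le : ∀ x : f.domain, c ≤ p ((x : E) + y) - f x := fun x => hc_least _ (hubS x)
  have hc_ge : ∀ x : f.domain, f x - p ((x : E) - y) ≤ c := fun x => hc_ub ⟨x, rfl⟩
  refine ⟨f.supSpanSingleton y c hy, ?_, ?_⟩
  · refine lt_iff_le_not_ge.2 ⟨f.left_le_sup _ _, fun H => ?_⟩
    replace H := LinearPMap.domain_mono.monotone H
    rw [LinearPMap.domain_supSpanSingleton, sup_le_iff, span_le, Set.singleton_subset_iff] at H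
    exact hy H.2
  · rintro ⟨z, hz⟩
    rw [LinearPMap.domain_supSpanSingleton] at hz
    rcases mem_sup.1 hz with ⟨x, hx, y', hy', rfl⟩
    rcases mem_span_singleton.1 hy' with ⟨t, rfl⟩
    rw [LinearPMap.supSpanSingleton_apply_mk _ _ _ _ _ hx]
    rcases lt_trichotomy t 0 with (ht | rfl | ht)
    · set s : ℝ := -t with hs
      have hs0 : 0 < s := by simp [hs]; linarith
      have h1 := hc_ge (s⁻¹ • ⟨x, hx⟩)
      replace h1 := L0.smul_le_smul hs0.le h1
      rw [smul_sub, f.map_smul, smul_smul, mul_inv_cancel₀ hs0.ne', one_smul] at h1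
      have h2 : s • p (((s⁻¹ • (⟨x, hx⟩ : f.domain) : f.domain) : E) - y) = p (x + t • y) := by
        rw [← hp_smul s hs0]
        congr 1
        simp only [SetLike.val_smul, smul_sub, smul_smul, mul_inv_cancel₀ hs0.ne', one_smul]
        rw [hs]; module
      rw [h2] at h1
      have : f ⟨x, hx⟩ - p (x + t • y) ≤ s • c := h1
      have h3 : s • c = -(t • c) := by rw [hs, neg_smul]
      rw [h3] at this
      calc f ⟨x, hx⟩ + t • c = f ⟨x, hx⟩ - -(t • c) := by abel
        _ ≤ p (x + t • y) := sub_le_iff_le_add.2 (by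
            have := sub_le_iff_le_add.1 this
            calc f ⟨x, hx⟩ ≤ s • c + p (x + t • y) := by
                  rw [h3]; exact this
              _ = p (x + t • y) + -(t • c) := by rw [h3]; abel)
    · simp only [zero_smul, add_zero, RingHom.id_apply]
      exact hf ⟨x, hx⟩
    · have h1 := hc_le (t⁻¹ • ⟨x, hx⟩)
      replace h1 := L0.smul_le_smul ht.le h1
      rw [smul_sub, f.map_smul, smul_smul, mul_inv_cancel₀ ht.ne', one_smul] at h1
      have h2 : t • p (((t⁻¹ • (⟨x, hx⟩ : f.domain) : f.domain) : E) + y) = p (x + t • y) := by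
        rw [← hp_smul t ht]
        congr 1
        simp only [SetLike.val_smul, smul_add, smul_smul, mul_inv_cancel₀ ht.ne', one_smul]
      rw [h2] at h1
      calc f ⟨x, hx⟩ + t • c ≤ f ⟨x, hx⟩ + (p (x + t • y) - f ⟨x, hx⟩) :=
            add_le_add_right h1 _
        _ = p (x + t • y) := by abel

theorem L0.hahn_banach_real (p : E → Ω →ₘ[μ] ℝ)
    (hp_smul : ∀ (t : ℝ), 0 < t → ∀ x, p (t • x) = t • p x)
    (hp_add : ∀ x y, p (x + y) ≤ p x + p y)
    (f : E →ₗ.[ℝ] (Ω →ₘ[μ] ℝ)) (hf : ∀ x : f.domain, f x ≤ p x) :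
    ∃ g : E →ₗ[ℝ] (Ω →ₘ[μ] ℝ), (∀ x : f.domain, g x = f x) ∧ ∀ x, g x ≤ p x := by
  set S := { φ : E →ₗ.[ℝ] (Ω →ₘ[μ] ℝ) | ∀ x : φ.domain, φ x ≤ p x } with hSdef
  have hSc : ∀ c, c ⊆ S → IsChain (· ≤ ·) c → ∀ y ∈ c, ∃ ub ∈ S, ∀ z ∈ c, z ≤ ub := by
    intro c hcs c_chain y hy
    have cne : c.Nonempty := ⟨y, hy⟩
    have hcd : DirectedOn (· ≤ ·) c := c_chain.directedOn
    refine ⟨LinearPMap.sSup c hcd, ?_, fun _ => LinearPMap.le_sSup hcd⟩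
    rintro ⟨x, hx⟩
    have hdir : DirectedOn (· ≤ ·) (LinearPMap.domain '' c) :=
      directedOn_image.2 (hcd.mono LinearPMap.domain_mono.monotone)
    rcases (mem_sSup_of_directed (cne.image _) hdir).1 hx with ⟨_, ⟨φ, hφc, rfl⟩, hφx⟩
    have hle : φ ≤ LinearPMap.sSup c hcd := LinearPMap.le_sSup _ hφc
    have key : (LinearPMap.sSup c hcd) ⟨x, hx⟩ = φ ⟨x, hφx⟩ :=
      (hle.2 (show ((⟨x, hφx⟩ : φ.domain) : E)
        = ((⟨x, hx⟩ : (LinearPMap.sSup c hcd).domain) : E) from rfl)).symm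
    rw [key]
    exact hcs hφc ⟨x, hφx⟩
  obtain ⟨q, hfq, hqS, hqmax⟩ := zorn_le_nonempty₀ S hSc f hf
  have hqtop : q.domain = ⊤ := by
    by_contra hqd
    obtain ⟨r, hqr, hr⟩ := L0.hb_step p hp_smul hp_add q hqS hqd
    exact hqr.ne (le_antisymm hqr.le (hqmax hr hqr.le))
  obtain ⟨q_dom, qf⟩ := q
  obtain rfl : q_dom = ⊤ := hqtop
  refine ⟨qf.comp (LinearMap.id.codRestrict ⊤ fun _ => trivial), fun x => ?_, fun x => ?_⟩
  · exact (hfq.2 (show ((x : E)) = (((LinearMap.id.codRestrict ⊤ fun _ => trivial) (x : E) : (⊤ : Submodule ℝ E)) : E) from rfl)).symm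
  · exact hqS ⟨x, trivial⟩


/-- real part of an element of `L⁰(F,ℂ)` -/
noncomputable def L0.re (ξ : Ω →ₘ[μ] ℂ) : Ω →ₘ[μ] ℝ :=
  AEEqFun.comp Complex.re Complex.continuous_re ξ

/-- embedding of `L⁰(F,ℝ)` into `L⁰(F,ℂ)` -/
noncomputable def L0.ofRealAE (a : Ω →ₘ[μ] ℝ) : Ω →ₘ[μ] ℂ :=
  AEEqFun.comp (fun t : ℝ => (t : ℂ)) Complex.continuous_ofReal a

lemma L0.coeFn_re (ξ : Ω →ₘ[μ] ℂ) : ⇑(L0.re ξ) =ᵐ[μ] fun ω => (ξ ω).re :=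
  AEEqFun.coeFn_comp _ _ _

lemma L0.coeFn_ofRealAE (a : Ω →ₘ[μ] ℝ) :
    ⇑(L0.ofRealAE a) =ᵐ[μ] fun ω => ((a ω : ℝ) : ℂ) :=
  AEEqFun.coeFn_comp _ _ _

lemma L0.coeFn_abs (ξ : Ω →ₘ[μ] ℂ) : ⇑(L0.abs ξ) =ᵐ[μ] fun ω => ‖ξ ω‖ :=
  AEEqFun.coeFn_comp _ _ _

lemma L0.norm_le_of_forall_rat (z : ℂ) (C : ℝ)
    (h : ∀ q : ℚ, (Complex.exp ((q : ℝ) * Complex.I) * z).re ≤ C) : ‖z‖ ≤ C := by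
  have hcont : Continuous fun θ : ℝ => (Complex.exp ((θ : ℂ) * Complex.I) * z).re :=
    Complex.continuous_re.comp
      ((Complex.continuous_exp.comp (Complex.continuous_ofReal.mul continuous_const)).mul
        continuous_const)
  have hclosed : IsClosed {θ : ℝ | (Complex.exp ((θ : ℂ) * Complex.I) * z).re ≤ C} :=
    isClosed_le hcont continuous_const
  have hall : ∀ θ : ℝ, (Complex.exp ((θ : ℂ) * Complex.I) * z).re ≤ C := by
    intro θ
    have hsub : Set.range ((↑) : ℚ → ℝ) ⊆
        {θ : ℝ | (Complex.exp ((θ : ℂ) * Complex.I) * z).re ≤ C} := by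
      rintro - ⟨q, rfl⟩; exact h q
    have hmem : θ ∈ closure (Set.range ((↑) : ℚ → ℝ)) := Rat.denseRange_cast θ
    have := closure_mono hsub hmem
    rwa [hclosed.closure_eq] at this
  have h2 := hall (-z.arg)
  have hz : Complex.exp ((↑(-z.arg) : ℂ) * Complex.I) * z = ((‖z‖ : ℝ) : ℂ) := by
    calc Complex.exp ((↑(-z.arg) : ℂ) * Complex.I) * z
        = Complex.exp ((↑(-z.arg) : ℂ) * Complex.I) *
          (↑‖z‖ * Complex.exp (↑z.arg * Complex.I)) := by
          rw [Complex.norm_mul_exp_arg_mul_I z]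
      _ = ↑‖z‖ *
          (Complex.exp ((↑(-z.arg) : ℂ) * Complex.I) * Complex.exp (↑z.arg * Complex.I)) := by
          ring
      _ = ↑‖z‖ * Complex.exp ((↑(-z.arg) : ℂ) * Complex.I + ↑z.arg * Complex.I) := by
          rw [Complex.exp_add]
      _ = ↑‖z‖ := by
          rw [show ((↑(-z.arg) : ℂ) * Complex.I + ↑z.arg * Complex.I) = 0 by push_cast; ring,
            Complex.exp_zero, mul_one]
      _ = ((‖z‖ : ℝ) : ℂ) := rfl
  rw [hz] at h2
  simpa using h2


end Aux

/-- **Theorem 2.2 (Hahn–Banach for random linear functionals, complex case).** Let `E` be a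
complex linear space, `M ⊆ E` a complex subspace, `p : E → L⁰₊` a random seminorm and
`f : M → L⁰(F,ℂ)` a complex linear map with `|f| ≤ p` on `M`. Then `f` extends to a complex
linear map `g : E → L⁰(F,ℂ)` with `|g| ≤ p` on `E`. -/
theorem random_hahn_banach_complex {Ω : Type*} [MeasurableSpace Ω] (μ : Measure Ω)
    [IsProbabilityMeasure μ] (E : Type*) [AddCommGroup E] [Module ℂ E]
    (M : Submodule ℂ E) (p : E → Ω →ₘ[μ] ℝ)
    (hp_nonneg : ∀ x : E, 0 ≤ p x)
    (hp_smul : ∀ (a : ℂ) (x : E), p (a • x) = ‖a‖ • p x)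
    (hp_add : ∀ x y : E, p (x + y) ≤ p x + p y)
    (f : M →ₗ[ℂ] Ω →ₘ[μ] ℂ)
    (hfp : ∀ m : M, L0.abs (f m) ≤ p (m : E)) :
    ∃ g : E →ₗ[ℂ] Ω →ₘ[μ] ℂ,
      (∀ m : M, g (m : E) = f m) ∧ ∀ x : E, L0.abs (g x) ≤ p x := by
  classical
  set M' : Submodule ℝ E := M.restrictScalars ℝ with hM'
  let ι : M' → M := fun m => ⟨m.1, m.2⟩
  have ι_add : ∀ a b : M', ι (a + b) = ι a + ι b := fun a b => Subtype.ext rfl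
  have ι_smul : ∀ (t : ℝ) (a : M'), ι (t • a) = (t : ℂ) • ι a := fun t a =>
    Subtype.ext (by simp [ι, Complex.coe_smul])
  -- real-part lemmas
  have re_add : ∀ ξ η : Ω →ₘ[μ] ℂ, L0.re (ξ + η) = L0.re ξ + L0.re η := by
    intro ξ η; apply AEEqFun.ext
    filter_upwards [L0.coeFn_re (ξ + η), L0.coeFn_re ξ, L0.coeFn_re η, AEEqFun.coeFn_add ξ η,
      AEEqFun.coeFn_add (L0.re ξ) (L0.re η)] with ω h1 h2 h3 h4 h5
    rw [h1, h5]
    simp [h4, h2, h3]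
  have re_rsmul : ∀ (t : ℝ) (ξ : Ω →ₘ[μ] ℂ), L0.re ((t : ℂ) • ξ) = t • L0.re ξ := by
    intro t ξ; apply AEEqFun.ext
    filter_upwards [L0.coeFn_re ((t : ℂ) • ξ), L0.coeFn_re ξ,
      AEEqFun.coeFn_smul (t : ℂ) ξ, AEEqFun.coeFn_smul t (L0.re ξ)] with ω h1 h2 h3 h4
    rw [h1, h4]
    simp [h3, h2]
  have re_le_abs : ∀ ξ : Ω →ₘ[μ] ℂ, L0.re ξ ≤ L0.abs ξ := by
    intro ξ
    rw [← AEEqFun.coeFn_le]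
    filter_upwards [L0.coeFn_re ξ, L0.coeFn_abs ξ] with ω h1 h2
    rw [h1, h2]
    exact Complex.re_le_norm _
  -- the restricted real functional
  let h₀ : M' →ₗ[ℝ] (Ω →ₘ[μ] ℝ) :=
    { toFun := fun m => L0.re (f (ι m))
      map_add' := fun a b => by
        show L0.re (f (ι (a + b))) = L0.re (f (ι a)) + L0.re (f (ι b))
        rw [ι_add, map_add, re_add]
      map_smul' := fun t a => by
        show L0.re (f (ι (t • a))) = (RingHom.id ℝ) t • L0.re (f (ι a))
        rw [ι_smul, LinearMap.map_smul, re_rsmul]; rfl }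
  have hp_smul' : ∀ (t : ℝ), 0 < t → ∀ x : E, p (t • x) = t • p x := by
    intro t ht x
    rw [← Complex.coe_smul, hp_smul]
    congr 1
    rw [Complex.norm_real, Real.norm_eq_abs, abs_of_pos ht]
  have hf₀ : ∀ x : (LinearPMap.mk M' h₀ : E →ₗ.[ℝ] (Ω →ₘ[μ] ℝ)).domain,
      (LinearPMap.mk M' h₀) x ≤ p x := fun m => (re_le_abs _).trans (hfp (ι m))
  obtain ⟨h, hh_ext, hh_le⟩ := L0.hahn_banach_real p hp_smul' hp_add ⟨M', h₀⟩ hf₀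
  -- the complex extension
  set gf : E → (Ω →ₘ[μ] ℂ) :=
    fun x => L0.ofRealAE (h x) - Complex.I • L0.ofRealAE (h (Complex.I • x)) with hgf
  have hgf_coe : ∀ x : E, ⇑(gf x) =ᵐ[μ]
      fun ω => ((h x ω : ℝ) : ℂ) - Complex.I * ((h (Complex.I • x) ω : ℝ) : ℂ) := by
    intro x
    filter_upwards [AEEqFun.coeFn_sub (L0.ofRealAE (h x))
        (Complex.I • L0.ofRealAE (h (Complex.I • x))),
      AEEqFun.coeFn_smul Complex.I (L0.ofRealAE (h (Complex.I • x))),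
      L0.coeFn_ofRealAE (h x), L0.coeFn_ofRealAE (h (Complex.I • x))] with ω h1 h2 h3 h4
    rw [hgf]
    simp only [h1, Pi.sub_apply, h2, Pi.smul_apply, h3, h4, smul_eq_mul]
  have hg_add : ∀ x y : E, gf (x + y) = gf x + gf y := by
    intro x y
    have e1 : h (x + y) = h x + h y := map_add h x y
    have e2 : h (Complex.I • (x + y)) = h (Complex.I • x) + h (Complex.I • y) := by
      rw [smul_add, map_add]
    apply AEEqFun.ext
    filter_upwards [hgf_coe (x + y), hgf_coe x, hgf_coe y,
      AEEqFun.coeFn_add (gf x) (gf y),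
      AEEqFun.coeFn_add (h x) (h y),
      AEEqFun.coeFn_add (h (Complex.I • x)) (h (Complex.I • y))] with ω h1 h2 h3 h4 h5 h6
    rw [h1, h4]
    simp only [Pi.add_apply]
    rw [h2, h3, e1, e2, h5, h6]
    simp only [Pi.add_apply]
    push_cast
    ring
  have hg_smul : ∀ (a : ℂ) (x : E), gf (a • x) = a • gf x := by
    intro a x
    have e3 : a • x = a.re • x + a.im • (Complex.I • x) := by
      rw [← Complex.coe_smul, ← Complex.coe_smul, smul_smul, ← add_smul, Complex.re_add_im]
    have e5 : Complex.I • (a • x) = (-a.im) • x + a.re • (Complex.I • x) := by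
      rw [smul_smul]
      have hIa : Complex.I * a = ((-a.im : ℝ) : ℂ) + ((a.re : ℝ) : ℂ) * Complex.I := by
        simp [Complex.ext_iff]
      rw [hIa, add_smul, mul_smul, Complex.coe_smul, Complex.coe_smul]
    have e6 : h (a • x) = a.re • h x + a.im • h (Complex.I • x) := by
      rw [e3, map_add, LinearMap.map_smul, LinearMap.map_smul]
    have e7 : h (Complex.I • (a • x)) = (-a.im) • h x + a.re • h (Complex.I • x) := by
      rw [e5, map_add, LinearMap.map_smul, LinearMap.map_smul]
    apply AEEqFun.ext
    filter_upwards [hgf_coe (a • x), hgf_coe x, AEEqFun.coeFn_smul a (gf x),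
      AEEqFun.coeFn_add (a.re • h x) (a.im • h (Complex.I • x)),
      AEEqFun.coeFn_add ((-a.im) • h x) (a.re • h (Complex.I • x)),
      AEEqFun.coeFn_smul a.re (h x), AEEqFun.coeFn_smul a.im (h (Complex.I • x)),
      AEEqFun.coeFn_smul (-a.im) (h x),
      AEEqFun.coeFn_smul a.re (h (Complex.I • x))] with ω h1 h2 h3 h4 h5 h6 h7 h8 h9
    rw [h1, h3, e6, e7, h4, h5]
    simp only [Pi.add_apply, Pi.smul_apply, h6, h7, h8, h9, h2, smul_eq_mul]
    push_cast
    simp only [Complex.ext_iff, Complex.add_re, Complex.add_im, Complex.sub_re, Complex.sub_im,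
      Complex.mul_re, Complex.mul_im, Complex.I_re, Complex.I_im, Complex.ofReal_re,
      Complex.ofReal_im, Complex.neg_re, Complex.neg_im]
    constructor <;> ring
  let g : E →ₗ[ℂ] (Ω →ₘ[μ] ℂ) :=
    { toFun := gf
      map_add' := hg_add
      map_smul' := hg_smul }
  have hre_g : ∀ x : E, L0.re (gf x) = h x := by
    intro x
    apply AEEqFun.ext
    filter_upwards [L0.coeFn_re (gf x), hgf_coe x] with ω h1 h2
    rw [h1, h2]
    simp
  have hext : ∀ m : M, gf (m : E) = f m := by
    intro m
    have hm1 : h (m : E) = L0.re (f m) := by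
      have := hh_ext ⟨(m : E), m.2⟩
      exact this
    have hm2 : h (Complex.I • (m : E)) = L0.re (Complex.I • f m) := by
      have h2 : f (ι ⟨((Complex.I • m : M) : E), (Complex.I • m : M).2⟩) = Complex.I • f m := by
        have h3 : (ι ⟨((Complex.I • m : M) : E), (Complex.I • m : M).2⟩) = Complex.I • m :=
          Subtype.ext rfl
        rw [h3, LinearMap.map_smul]
      have h4 := hh_ext ⟨((Complex.I • m : M) : E), (Complex.I • m : M).2⟩
      rw [← h2]
      exact h4
    apply AEEqFun.ext
    filter_upwards [hgf_coe (m : E), L0.coeFn_re (f m), L0.coeFn_re (Complex.I • f m),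
      AEEqFun.coeFn_smul Complex.I (f m)] with ω h1 h2 h3 h4
    rw [h1, hm1, hm2, h2, h3, h4]
    simp only [Pi.smul_apply, smul_eq_mul]
    simp [Complex.ext_iff]
  have hkey : ∀ (c : ℂ), ‖c‖ = 1 → ∀ x : E, L0.re (c • gf x) ≤ p x := by
    intro c hc x
    rw [← hg_smul, hre_g]
    calc h (c • x) ≤ p (c • x) := hh_le _
      _ = p x := by rw [hp_smul, hc, one_smul]
  refine ⟨g, fun m => hext m, fun x => ?_⟩
  have hqq : ∀ q : ℚ, ∀ᵐ ω ∂μ, (Complex.exp ((q : ℝ) * Complex.I) * (gf x) ω).re ≤ (p x) ω := by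
    intro q
    have hnorm : ‖Complex.exp ((q : ℝ) * Complex.I)‖ = 1 := by
      exact Complex.norm_exp_ofReal_mul_I (q : ℝ)
    have h1 := AEEqFun.coeFn_le.2 (hkey _ hnorm x)
    filter_upwards [h1, L0.coeFn_re (Complex.exp ((q : ℝ) * Complex.I) • gf x),
      AEEqFun.coeFn_smul (Complex.exp ((q : ℝ) * Complex.I)) (gf x)] with ω a1 a2 a3
    calc (Complex.exp ((q : ℝ) * Complex.I) * (gf x) ω).re
        = ((Complex.exp ((q : ℝ) * Complex.I) • gf x) ω).re := by rw [a3]; simp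
      _ ≤ (p x) ω := a2 ▸ a1
  rw [show (g x : Ω →ₘ[μ] ℂ) = gf x from rfl, ← AEEqFun.coeFn_le]
  filter_upwards [ae_all_iff.2 hqq, L0.coeFn_abs (gf x)] with ω a1 a2
  rw [a2]
  exact L0.norm_le_of_forall_rat _ _ a1
end

section
/- Let E be a module over L⁰(F,K) satisfying the convention that x = y whenever there is a countable measurable partition {Aₙ} of Ω with 1_{Aₙ}·x = 1_{Aₙ}·y for all n. For any module E^# = {f : E → L⁰(F,K) : f is a module homomorphism}, E^# has the countable concatenation property: for any countable measurable partition {Aₙ} of Ω and any sequence {fₙ} in E^#, the function f defined by f(x) = Σₙ 1_{Aₙ}·fₙ(x) belongs to E^# and satisfies 1_{Aₙ}·f = 1_{Aₙ}·fₙ for each n. -/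
open MeasureTheory

variable {Ω : Type*} [MeasurableSpace Ω] {μ : MeasureTheory.Measure Ω}

/-- The indicator function of a measurable set `A`, as an element of `L⁰(F,𝕜)`. -/
noncomputable def L0.ind {Ω : Type*} [MeasurableSpace Ω] (μ : Measure Ω) (𝕜 : Type*)
    [RCLike 𝕜] (A : Set Ω) (_hA : MeasurableSet A) : Ω →ₘ[μ] 𝕜 :=
  AEEqFun.mk (A.indicator fun _ => (1 : 𝕜))
    (stronglyMeasurable_const.indicator _hA).aestronglyMeasurable

/-- A countable measurable partition of `Ω`. -/
structure IsMeasPartition {Ω : Type*} [MeasurableSpace Ω] (A : ℕ → Set Ω) : Prop where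
  meas : ∀ n, MeasurableSet (A n)
  disj : Pairwise (Function.onFun Disjoint A)
  cover : (⋃ n, A n) = Set.univ

section Aux

variable {𝕜 : Type*} [RCLike 𝕜]

theorem L0.ind_mul_aux (A : Set Ω) (hAm : MeasurableSet A) (u : Ω →ₘ[μ] 𝕜) :
    ⇑(L0.ind μ 𝕜 A hAm * u) =ᵐ[μ] fun ω => A.indicator (fun _ => (1:𝕜)) ω * u ω := by
  filter_upwards [AEEqFun.coeFn_mul (L0.ind μ 𝕜 A hAm) u,
    AEEqFun.coeFn_mk (μ := μ) (A.indicator fun _ => (1 : 𝕜))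
      (stronglyMeasurable_const.indicator hAm).aestronglyMeasurable] with ω h1 h2
  simp only [L0.ind] at h1 ⊢
  rw [h1, Pi.mul_apply, h2]

theorem L0.ext_of_partition (A : ℕ → Set Ω) (hA : IsMeasPartition A) (u v : Ω →ₘ[μ] 𝕜)
    (h : ∀ n, L0.ind μ 𝕜 (A n) (hA.meas n) * u = L0.ind μ 𝕜 (A n) (hA.meas n) * v) :
    u = v := by
  rw [← AEEqFun.mk_coeFn u, ← AEEqFun.mk_coeFn v]
  apply AEEqFun.mk_eq_mk.2
  have h' : ∀ n, ∀ᵐ ω ∂μ, (A n).indicator (fun _ => (1:𝕜)) ω * u ω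
      = (A n).indicator (fun _ => (1:𝕜)) ω * v ω := by
    intro n
    filter_upwards [L0.ind_mul_aux (A n) (hA.meas n) u, L0.ind_mul_aux (A n) (hA.meas n) v]
      with ω h1 h2
    rw [← h1, ← h2, h n]
  filter_upwards [ae_all_iff.2 h'] with ω hω
  obtain ⟨n, hn⟩ : ∃ n, ω ∈ A n := by
    have := hA.cover ▸ Set.mem_univ ω; simpa using this
  have := hω n
  rwa [Set.indicator_of_mem hn, one_mul, one_mul] at this

end Aux

/-- **Example 3.6.** Let `E` be a module over `L⁰(F,𝕜)` satisfying the convention that two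
elements agreeing on a countable measurable partition of `Ω` are equal. Then the module
`E^# = {f : E → L⁰(F,𝕜) : f is a module homomorphism}` has the countable concatenation
property: for every countable measurable partition `{Aₙ}` of `Ω` and every sequence `{fₙ}`
in `E^#`, there is a (necessarily unique) `f ∈ E^#`, the concatenation `Σₙ 1_{Aₙ}·fₙ`,
with `1_{Aₙ}·f = 1_{Aₙ}·fₙ` for every `n`. -/

theorem module_homs_have_countable_concatenation_property
    {Ω : Type*} [MeasurableSpace Ω] (μ : Measure Ω) [IsProbabilityMeasure μ]
    (𝕜 : Type*) [RCLike 𝕜] (E : Type*) [AddCommGroup E] [Module (Ω →ₘ[μ] 𝕜) E]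
    (hconv : ∀ (A : ℕ → Set Ω) (hA : IsMeasPartition A) (x y : E),
      (∀ n, L0.ind μ 𝕜 (A n) (hA.meas n) • x = L0.ind μ 𝕜 (A n) (hA.meas n) • y) → x = y)
    (A : ℕ → Set Ω) (hA : IsMeasPartition A)
    (f : ℕ → E →ₗ[Ω →ₘ[μ] 𝕜] Ω →ₘ[μ] 𝕜) :
    ∃! g : E →ₗ[Ω →ₘ[μ] 𝕜] Ω →ₘ[μ] 𝕜,
      ∀ n, L0.ind μ 𝕜 (A n) (hA.meas n) • g = L0.ind μ 𝕜 (A n) (hA.meas n) • f n := by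
  classical
  letI : MeasurableSpace 𝕜 := borel 𝕜
  haveI : BorelSpace 𝕜 := ⟨rfl⟩
  have hcov : ∀ ω : Ω, ∃ n, ω ∈ A n := fun ω => by
    have := hA.cover ▸ Set.mem_univ ω; simpa using this
  -- the concatenated function
  have hmeas : ∀ x : E, Measurable fun ω => (f (Nat.find (hcov ω)) x : Ω → 𝕜) ω :=
    fun x => Measurable.find (p := fun n ω => ω ∈ A n) (fun n => (f n x).stronglyMeasurable.measurable) hA.meas hcov
  set G : E → Ω →ₘ[μ] 𝕜 := fun x =>
    AEEqFun.mk (fun ω => (f (Nat.find (hcov ω)) x : Ω → 𝕜) ω)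
      (hmeas x).aestronglyMeasurable with hG
  have hfind : ∀ {n : ℕ} {ω : Ω}, ω ∈ A n → Nat.find (hcov ω) = n := by
    intro n ω hn
    by_contra hne
    exact Set.disjoint_left.1 (hA.disj hne) (Nat.find_spec (hcov ω)) hn
  -- key identity
  have key : ∀ n x, L0.ind μ 𝕜 (A n) (hA.meas n) * G x
      = L0.ind μ 𝕜 (A n) (hA.meas n) * f n x := by
    intro n x
    rw [← AEEqFun.mk_coeFn (L0.ind μ 𝕜 (A n) (hA.meas n) * G x),
        ← AEEqFun.mk_coeFn (L0.ind μ 𝕜 (A n) (hA.meas n) * f n x)]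
    apply AEEqFun.mk_eq_mk.2
    filter_upwards [L0.ind_mul_aux (A n) (hA.meas n) (G x),
      L0.ind_mul_aux (A n) (hA.meas n) (f n x),
      AEEqFun.coeFn_mk (μ := μ) (fun ω => (f (Nat.find (hcov ω)) x : Ω → 𝕜) ω)
        (hmeas x).aestronglyMeasurable] with ω h1 h2 h3
    rw [h1, h2]
    by_cases hω : ω ∈ A n
    · rw [Set.indicator_of_mem hω]
      have : (G x : Ω → 𝕜) ω = (f (Nat.find (hcov ω)) x : Ω → 𝕜) ω := h3
      rw [this, hfind hω]
    · rw [Set.indicator_of_notMem hω, zero_mul, zero_mul]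
  have ext' : ∀ u v : Ω →ₘ[μ] 𝕜, (∀ n, L0.ind μ 𝕜 (A n) (hA.meas n) * u = L0.ind μ 𝕜 (A n) (hA.meas n) * v) → u = v := fun u v h => L0.ext_of_partition A hA u v h
  -- linearity
  set g : E →ₗ[Ω →ₘ[μ] 𝕜] Ω →ₘ[μ] 𝕜 :=
    { toFun := G
      map_add' := fun x y => by
        apply ext'
        intro n
        rw [key n (x + y), map_add, mul_add, mul_add, key n x, key n y]
      map_smul' := fun c x => by
        apply ext'
        intro n
        rw [RingHom.id_apply, key n (c • x), (f n).map_smul, smul_eq_mul, smul_eq_mul,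
          mul_left_comm, mul_left_comm _ c, key n x] } with hg
  refine ⟨g, fun n => ?_, fun g' hg' => ?_⟩
  · apply LinearMap.ext
    intro x
    simp only [LinearMap.smul_apply, smul_eq_mul]
    exact key n x
  · apply LinearMap.ext
    intro x
    apply ext'
    intro n
    have h1 := congrFun (congrArg (fun (h : E →ₗ[Ω →ₘ[μ] 𝕜] Ω →ₘ[μ] 𝕜) => (h : E → Ω →ₘ[μ] 𝕜)) (hg' n)) x
    simp only [LinearMap.smul_apply, smul_eq_mul] at h1
    rw [h1]
    exact (key n x).symm
end
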